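/- Every Delone set X of type (r,R) in ℝ with the property that all its ρ-clusters are mutually equivalent and contain points of X on both sides of their centers is an ab-set (distances between consecutive points alternate between two fixed values a and b, possibly equal), and hence a regular system. -/

import Mathlib

noncomputable section
open scoped Pointwise

/-- Euclidean d-space. -/
abbrev Euc (d : ℕ) : Type := EuclideanSpace ℝ (Fin d)

/-- The 1-based standard basis vector `e_k` of `ℝ^d` (for `1 ≤ k ≤ d`). -/
def eVec (d k : ℕ) : Euc d :=
  if h : k - 1 < d then EuclideanSpace.single ⟨k - 1, h⟩ (1 : ℝ) else 0

/-- Conditions (A1)–(A3) on the doubly-infinite integer sequence `A`. -/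
def EngelSeq (d : ℕ) (A : ℤ → ℤ) : Prop :=
  (∀ i : ℤ, 1 ≤ (A i).natAbs ∧ (A i).natAbs ≤ d - 1) ∧
  (∀ i : ℤ, (A (i + (d - 1))).natAbs = (A i).natAbs) ∧
  (∀ s : ℕ, 1 ≤ s → s ≤ d - 1 → ∃ i : ℤ, 1 ≤ i ∧ i ≤ d - 1 ∧ (A i).natAbs = s)

/-- The vector `u_i = sign(a_i) e_{|a_i|}`. -/
def engelU (d : ℕ) (A : ℤ → ℤ) (i : ℤ) : Euc d :=
  (if 0 < A i then (1 : ℝ) else -1) • eVec d (A i).natAbs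

/-- The cumulative sum `u_1 + ⋯ + u_i` (with the natural convention for `i ≤ 0`,
so that `engelCum 0 = 0` and `engelCum i - engelCum (i-1) = u_i` for all `i`). -/
def engelCum (d : ℕ) (A : ℤ → ℤ) (i : ℤ) : Euc d :=
  if 0 ≤ i then ∑ j ∈ Finset.range i.toNat, engelU d A ((j : ℤ) + 1)
  else -∑ j ∈ Finset.range (-i).toNat, engelU d A (-(j : ℤ))

/-- The translation vector placing layer `m` of an Engel set:
layer `m` lies at height `2bm`, and the horizontal shifts `δ·u_i` accumulate
according to (E3), (E4). (Integer division is floor division.) -/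
def engelOffset (d : ℕ) (A : ℤ → ℤ) (b δ : ℝ) (m : ℤ) : Euc d :=
  ((2 * b) * (m : ℝ)) • eVec d d + δ • engelCum d A (m / 2)

/-- The horizontal grid `Y = 2aℤ^{d-1} × {0}` in `ℝ^d`. -/
def engelGrid (d : ℕ) (a : ℝ) : Set (Euc d) :=
  {x | ∀ j : Fin d, ((j : ℕ) < d - 1 → ∃ m : ℤ, x j = 2 * a * (m : ℝ)) ∧
        ((j : ℕ) = d - 1 → x j = 0)}

/-- Layer `X_m` of the Engel set `X(A,a,b,δ)`. -/
def engelLayer (d : ℕ) (A : ℤ → ℤ) (a b δ : ℝ) (m : ℤ) : Set (Euc d) :=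
  engelOffset d A b δ m +ᵥ engelGrid d a

/-- The Engel set `X(A,a,b,δ) = ⋃_m X_m`. -/
def engelSet (d : ℕ) (A : ℤ → ℤ) (a b δ : ℝ) : Set (Euc d) :=
  ⋃ m : ℤ, engelLayer d A a b δ m

/-- A Delone set of type `(r,R)`: every open `r`-ball contains at most one point of `X`,
and every closed `R`-ball contains at least one point of `X`. -/
def IsDeloneSet {V : Type*} [MetricSpace V] (X : Set V) (r R : ℝ) : Prop :=
  (∀ y : V, (X ∩ Metric.ball y r).Subsingleton) ∧
  (∀ y : V, (X ∩ Metric.closedBall y R).Nonempty)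

/-- The ρ-cluster of `X` at `x`. -/
def cluster {V : Type*} [MetricSpace V] (X : Set V) (x : V) (ρ : ℝ) : Set V :=
  X ∩ Metric.closedBall x ρ

/-- Equivalence of the ρ-clusters of `X` at `x` and `x'`: an isometry of the ambient
space carries the one cluster onto the other, mapping center to center. -/
def ClustersEquiv {V : Type*} [MetricSpace V] (X : Set V) (x x' : V) (ρ : ℝ) : Prop :=
  ∃ g : V ≃ᵢ V, g x = x' ∧ g '' cluster X x ρ = cluster X x' ρ

/-- A regular system: the symmetry group of `X` acts transitively on `X`. -/
def IsRegularSystem {V : Type*} [MetricSpace V] (X : Set V) : Prop :=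
  ∀ x ∈ X, ∀ y ∈ X, ∃ g : V ≃ᵢ V, g '' X = X ∧ g x = y

/-- An `ab`-set on the line: the points can be enumerated in increasing order so that
consecutive gaps alternately equal `a` and `b`. -/
def IsABSet (X : Set ℝ) (a b : ℝ) : Prop :=
  ∃ f : ℤ → ℝ, StrictMono f ∧ Set.range f = X ∧
    (∀ i : ℤ, f (2 * i + 1) - f (2 * i) = a) ∧
    (∀ i : ℤ, f (2 * i + 2) - f (2 * i + 1) = b)

def reflIso (c : ℝ) : ℝ ≃ᵢ ℝ where
  toEquiv :=
    { toFun := fun t => c - t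
      invFun := fun t => c - t
      left_inv := fun t => by ring
      right_inv := fun t => by ring }
  isometry_toFun := Isometry.of_dist_eq (fun x y => by
    simp only [Real.dist_eq]; rw [show c - x - (c - y) = -(x - y) by ring, abs_neg])

def transIso (c : ℝ) : ℝ ≃ᵢ ℝ where
  toEquiv :=
    { toFun := fun t => t + c
      invFun := fun t => t - c
      left_inv := fun t => by ring
      right_inv := fun t => by ring }
  isometry_toFun := Isometry.of_dist_eq (fun x y => by
    simp only [Real.dist_eq]; ring_nf)

@[simp] lemma reflIso_apply (c t : ℝ) : reflIso c t = c - t := rfl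
@[simp] lemma transIso_apply (c t : ℝ) : transIso c t = t + c := rfl


lemma isom_real_form (g : ℝ ≃ᵢ ℝ) :
    (∀ t : ℝ, g t = g 0 + t) ∨ (∀ t : ℝ, g t = g 0 - t) := by
  have key : ∀ t : ℝ, g t = g 0 + (g 1 - g 0) * t := by
    intro t
    have h0 := g.dist_eq t 0
    have h1 := g.dist_eq t 1
    have h2 := g.dist_eq 1 0
    rw [Real.dist_eq, Real.dist_eq] at h0 h1 h2
    have e0 : ((g : ℝ → ℝ) t - g 0) ^ 2 = (t - 0) ^ 2 := by rw [← sq_abs, h0, sq_abs]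
    have e1 : ((g : ℝ → ℝ) t - g 1) ^ 2 = (t - 1) ^ 2 := by rw [← sq_abs, h1, sq_abs]
    have e2 : ((g : ℝ → ℝ) 1 - g 0) ^ 2 = (1 - 0 : ℝ) ^ 2 := by rw [← sq_abs, h2, sq_abs]
    nlinarith [e0, e1, e2]
  have h2 := g.dist_eq 1 0
  rw [Real.dist_eq] at h2
  have : (g : ℝ → ℝ) 1 - g 0 = 1 ∨ (g : ℝ → ℝ) 1 - g 0 = -1 := by
    rcases abs_eq (by norm_num : (0:ℝ) ≤ 1) |>.mp (by simpa using h2) with h | h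
    · exact Or.inl h
    · exact Or.inr h
  rcases this with h | h
  · left; intro t; rw [key t, h, one_mul]
  · right; intro t; rw [key t, h]; ring


theorem delone_aux_pair (r R ρ : ℝ) (hr : 0 < r) (hrR : r < R) (hρ : 0 < ρ)
    (X : Set ℝ) (hX : IsDeloneSet X r R)
    (hclus : ∀ x ∈ X, ∀ x' ∈ X, ClustersEquiv X x x' ρ)
    (hsides : ∀ x ∈ X, (∃ y ∈ cluster X x ρ, y < x) ∧ (∃ y ∈ cluster X x ρ, x < y))
    (nxt prv : ℝ → ℝ)
    (hnxt : ∀ x ∈ X, IsLeast (X ∩ Set.Ioi x) (nxt x))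
    (hprv : ∀ x ∈ X, IsGreatest (X ∩ Set.Iio x) (prv x))
    (hnxt_le : ∀ x ∈ X, nxt x ≤ x + ρ)
    (hprv_ge : ∀ x ∈ X, x - ρ ≤ prv x) :
    ∀ x ∈ X, ∀ x' ∈ X,
      (nxt x' - x' = nxt x - x ∧ x' - prv x' = x - prv x) ∨
      (nxt x' - x' = x - prv x ∧ x' - prv x' = nxt x - x) := by
  have hnxt_mem : ∀ x ∈ X, nxt x ∈ X := fun x hx => (hnxt x hx).1.1
  have hnxt_gt : ∀ x ∈ X, x < nxt x := fun x hx => (hnxt x hx).1.2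
  have hprv_mem : ∀ x ∈ X, prv x ∈ X := fun x hx => (hprv x hx).1.1
  have hprv_lt : ∀ x ∈ X, prv x < x := fun x hx => (hprv x hx).1.2
  intro x hx x' hx'
  obtain ⟨g, hgx, himg⟩ := hclus x hx x' hx'
  have hnc : nxt x ∈ cluster X x ρ := by
    refine ⟨hnxt_mem x hx, Metric.mem_closedBall.mpr ?_⟩
    rw [Real.dist_eq, abs_le]
    constructor
    · linarith [hnxt_gt x hx]
    · linarith [hnxt_le x hx]
  have hpc : prv x ∈ cluster X x ρ := by
    refine ⟨hprv_mem x hx, Metric.mem_closedBall.mpr ?_⟩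
    rw [Real.dist_eq, abs_le]
    constructor
    · linarith [hprv_ge x hx]
    · linarith [hprv_lt x hx]
  have hnc' : nxt x' ∈ cluster X x' ρ := by
    refine ⟨hnxt_mem x' hx', Metric.mem_closedBall.mpr ?_⟩
    rw [Real.dist_eq, abs_le]
    constructor
    · linarith [hnxt_gt x' hx']
    · linarith [hnxt_le x' hx']
  have hpc' : prv x' ∈ cluster X x' ρ := by
    refine ⟨hprv_mem x' hx', Metric.mem_closedBall.mpr ?_⟩
    rw [Real.dist_eq, abs_le]
    constructor
    · linarith [hprv_ge x' hx']
    · linarith [hprv_lt x' hx']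
  rcases isom_real_form g with hform | hform
  · -- translation by x' - x
    left
    have hg0 : (g : ℝ → ℝ) 0 = x' - x := by
      have h := hform x; rw [hgx] at h; linarith
    have hg : ∀ t : ℝ, (g : ℝ → ℝ) t = t + (x' - x) := fun t => by
      rw [hform t, hg0]; ring
    have h1 : nxt x' ≤ nxt x + (x' - x) := by
      have hm : (g : ℝ → ℝ) (nxt x) ∈ cluster X x' ρ := himg ▸ Set.mem_image_of_mem _ hnc
      rw [hg] at hm
      exact (hnxt x' hx').2 ⟨hm.1, by simp only [Set.mem_Ioi]; linarith [hnxt_gt x hx]⟩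
    have h2 : nxt x + (x' - x) ≤ nxt x' := by
      have hm := hnc'
      rw [← himg] at hm
      obtain ⟨y, hy, hgy⟩ := hm
      rw [hg] at hgy
      have hxy : x < y := by linarith [hnxt_gt x' hx']
      have := (hnxt x hx).2 ⟨hy.1, hxy⟩
      linarith
    have h3 : prv x + (x' - x) ≤ prv x' := by
      have hm : (g : ℝ → ℝ) (prv x) ∈ cluster X x' ρ := himg ▸ Set.mem_image_of_mem _ hpc
      rw [hg] at hm
      exact (hprv x' hx').2 ⟨hm.1, by simp only [Set.mem_Iio]; linarith [hprv_lt x hx]⟩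
    have h4 : prv x' ≤ prv x + (x' - x) := by
      have hm := hpc'
      rw [← himg] at hm
      obtain ⟨y, hy, hgy⟩ := hm
      rw [hg] at hgy
      have hxy : y < x := by linarith [hprv_lt x' hx']
      have := (hprv x hx).2 ⟨hy.1, hxy⟩
      linarith
    constructor <;> linarith
  · -- reflection about (x + x')/2
    right
    have hg0 : (g : ℝ → ℝ) 0 = x + x' := by
      have h := hform x; rw [hgx] at h; linarith
    have hg : ∀ t : ℝ, (g : ℝ → ℝ) t = (x + x') - t := fun t => by
      rw [hform t, hg0]
    have h1 : nxt x' ≤ (x + x') - prv x := by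
      have hm : (g : ℝ → ℝ) (prv x) ∈ cluster X x' ρ := himg ▸ Set.mem_image_of_mem _ hpc
      rw [hg] at hm
      exact (hnxt x' hx').2 ⟨hm.1, by simp only [Set.mem_Ioi]; linarith [hprv_lt x hx]⟩
    have h2 : (x + x') - prv x ≤ nxt x' := by
      have hm := hnc'
      rw [← himg] at hm
      obtain ⟨y, hy, hgy⟩ := hm
      rw [hg] at hgy
      have hxy : y < x := by linarith [hnxt_gt x' hx']
      have := (hprv x hx).2 ⟨hy.1, hxy⟩
      linarith
    have h3 : prv x' ≤ (x + x') - nxt x := by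
      have hm := hpc'
      rw [← himg] at hm
      obtain ⟨y, hy, hgy⟩ := hm
      rw [hg] at hgy
      have hxy : x < y := by linarith [hprv_lt x' hx']
      have := (hnxt x hx).2 ⟨hy.1, hxy⟩
      linarith
    have h4 : (x + x') - nxt x ≤ prv x' := by
      have hm : (g : ℝ → ℝ) (nxt x) ∈ cluster X x' ρ := himg ▸ Set.mem_image_of_mem _ hnc
      rw [hg] at hm
      exact (hprv x' hx').2 ⟨hm.1, by simp only [Set.mem_Iio]; linarith [hnxt_gt x hx]⟩
    constructor <;> linarith

theorem delone_aux_main (X : Set ℝ) (nxt prv : ℝ → ℝ)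
    (hnxt : ∀ x ∈ X, IsLeast (X ∩ Set.Ioi x) (nxt x))
    (hprv : ∀ x ∈ X, IsGreatest (X ∩ Set.Iio x) (prv x))
    (x0 : ℝ) (hx0 : x0 ∈ X)
    (hpair0 : ∀ x ∈ X, ∀ x' ∈ X,
      (nxt x' - x' = nxt x - x ∧ x' - prv x' = x - prv x) ∨
      (nxt x' - x' = x - prv x ∧ x' - prv x' = nxt x - x)) :
    (∃ a b : ℝ, 0 < a ∧ a ≤ b ∧ IsABSet X a b) ∧ IsRegularSystem X := by
  classical
  have hnxt_mem : ∀ x ∈ X, nxt x ∈ X := fun x hx => (hnxt x hx).1.1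
  have hnxt_gt : ∀ x ∈ X, x < nxt x := fun x hx => (hnxt x hx).1.2
  have hprv_mem : ∀ x ∈ X, prv x ∈ X := fun x hx => (hprv x hx).1.1
  have hprv_lt : ∀ x ∈ X, prv x < x := fun x hx => (hprv x hx).1.2
  have hprv_nxt : ∀ x ∈ X, prv (nxt x) = x := by
    intro x hx
    refine (hprv (nxt x) (hnxt_mem x hx)).unique ⟨⟨hx, hnxt_gt x hx⟩, fun z hz => ?_⟩
    by_contra hzx
    push_neg at hzx
    exact absurd ((hnxt x hx).2 ⟨hz.1, hzx⟩) (not_le.mpr hz.2)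
  have hnxt_prv : ∀ x ∈ X, nxt (prv x) = x := by
    intro x hx
    refine (hnxt (prv x) (hprv_mem x hx)).unique ⟨⟨hx, hprv_lt x hx⟩, fun z hz => ?_⟩
    by_contra hzx
    push_neg at hzx
    exact absurd ((hprv x hx).2 ⟨hz.1, hzx⟩) (not_le.mpr hz.2)
  set A := nxt x0 - x0 with hA
  set B := x0 - prv x0 with hB
  set a := min A B with ha_def
  set b := max A B with hb_def
  have ha : 0 < a :=
    lt_min (by simp only [hA]; linarith [hnxt_gt x0 hx0])
      (by simp only [hB]; linarith [hprv_lt x0 hx0])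
  have hab : a ≤ b := min_le_max
  have hpair : ∀ x ∈ X, (nxt x - x = a ∧ x - prv x = b) ∨
      (nxt x - x = b ∧ x - prv x = a) := by
    intro x hx
    rcases le_total A B with hAB | hAB
    · have ea : a = A := min_eq_left hAB
      have eb : b = B := max_eq_right hAB
      rcases hpair0 x0 hx0 x hx with ⟨h1, h2⟩ | ⟨h1, h2⟩
      · left; rw [ea, eb]; exact ⟨h1, h2⟩
      · right; rw [ea, eb]; exact ⟨h1, h2⟩
    · have ea : a = B := min_eq_right hAB
      have eb : b = A := max_eq_left hAB
      rcases hpair0 x0 hx0 x hx with ⟨h1, h2⟩ | ⟨h1, h2⟩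
      · right; rw [ea, eb]; exact ⟨h1, h2⟩
      · left; rw [ea, eb]; exact ⟨h1, h2⟩
  obtain ⟨z0, hz0, hz0a⟩ : ∃ z, z ∈ X ∧ nxt z - z = a := by
    rcases le_total A B with hAB | hAB
    · exact ⟨x0, hx0, by rw [← hA, ha_def]; exact (min_eq_left hAB).symm⟩
    · refine ⟨prv x0, hprv_mem x0 hx0, ?_⟩
      rw [hnxt_prv x0 hx0, ← hB, ha_def]
      exact (min_eq_right hAB).symm
  set f : ℤ → ℝ := fun n => if 0 ≤ n then nxt^[n.toNat] z0 else prv^[(-n).toNat] z0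
    with hf_def
  have hgmem : ∀ k : ℕ, nxt^[k] z0 ∈ X := by
    intro k
    induction k with
    | zero => exact hz0
    | succ k ih => rw [Function.iterate_succ_apply']; exact hnxt_mem _ ih
  have hhmem : ∀ k : ℕ, prv^[k] z0 ∈ X := by
    intro k
    induction k with
    | zero => exact hz0
    | succ k ih => rw [Function.iterate_succ_apply']; exact hprv_mem _ ih
  have hfmem : ∀ n : ℤ, f n ∈ X := by
    intro n
    simp only [hf_def]
    split
    · exact hgmem _
    · exact hhmem _
  have hf0 : f 0 = z0 := by simp [hf_def]
  have hfsucc : ∀ n : ℤ, f (n + 1) = nxt (f n) := by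
    intro n
    by_cases hn : 0 ≤ n
    · have h1 : 0 ≤ n + 1 := by omega
      have h2 : (n + 1).toNat = n.toNat + 1 := by omega
      simp only [hf_def, if_pos hn, if_pos h1, h2, Function.iterate_succ_apply']
    · push_neg at hn
      have h2 : (-n).toNat = (-(n + 1)).toNat + 1 := by omega
      have hfn : f n = prv (prv^[(-(n + 1)).toNat] z0) := by
        simp only [hf_def, if_neg (not_le.mpr hn), h2, Function.iterate_succ_apply']
      have hfn1 : f (n + 1) = prv^[(-(n + 1)).toNat] z0 := by
        by_cases h3 : 0 ≤ n + 1
        · have h4 : n + 1 = 0 := by omega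
          rw [h4]
          simp [hf_def]
        · simp only [hf_def, if_neg h3]
      rw [hfn, hfn1, hnxt_prv _ (hhmem _)]
  have hfmono : StrictMono f :=
    strictMono_int_of_lt_succ (fun n => by rw [hfsucc]; exact hnxt_gt _ (hfmem n))
  have hgap : ∀ n : ℤ, f (n + 1) - f n = if Even n then a else b := by
    intro n
    induction n using Int.induction_on with
    | zero => rw [if_pos (Even.zero), hfsucc 0, hf0]; exact hz0a
    | succ k ih =>
      have hm := hfmem ((k : ℤ) + 1)
      have hd : f ((k : ℤ) + 1) - prv (f ((k : ℤ) + 1)) = f ((k : ℤ) + 1) - f k := by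
        rw [hfsucc (k : ℤ), hprv_nxt _ (hfmem k)]
      rw [hfsucc ((k : ℤ) + 1)]
      have e1 : Even ((k : ℤ) + 1) ↔ ¬Even (k : ℤ) := by
        rw [Int.even_iff, Int.even_iff]; omega
      rcases hpair _ hm with ⟨hA', hB'⟩ | ⟨hA', hB'⟩ <;> by_cases heven : Even (k : ℤ)
      · rw [if_pos heven] at ih
        rw [if_neg ((not_not.mpr heven) ∘ e1.mp)]
        linarith
      · rw [if_neg heven] at ih
        rw [if_pos (e1.mpr heven)]
        linarith
      · rw [if_pos heven] at ih
        rw [if_neg ((not_not.mpr heven) ∘ e1.mp)]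
        linarith
      · rw [if_neg heven] at ih
        rw [if_pos (e1.mpr heven)]
        linarith
    | pred k ih =>
      have hm := hfmem (-(k : ℤ))
      have efs : f (-(k : ℤ)) = nxt (f (-(k : ℤ) - 1)) := by
        have h := hfsucc (-(k : ℤ) - 1)
        rw [show -(k : ℤ) - 1 + 1 = -(k : ℤ) from by ring] at h
        exact h
      have hd : f (-(k : ℤ)) - prv (f (-(k : ℤ))) = f (-(k : ℤ)) - f (-(k : ℤ) - 1) := by
        rw [efs, hprv_nxt _ (hfmem _)]
      have ih' : nxt (f (-(k : ℤ))) - f (-(k : ℤ)) = if Even (-(k : ℤ)) then a else b := by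
        rw [← hfsucc]; exact ih
      have e1 : Even (-(k : ℤ) - 1) ↔ ¬Even (-(k : ℤ)) := by
        rw [Int.even_iff, Int.even_iff]; omega
      rw [show -(k : ℤ) - 1 + 1 = -(k : ℤ) from by ring]
      rcases hpair _ hm with ⟨hA', hB'⟩ | ⟨hA', hB'⟩ <;> by_cases heven : Even (-(k : ℤ))
      · rw [if_pos heven] at ih'
        rw [if_neg ((not_not.mpr heven) ∘ e1.mp)]
        linarith
      · rw [if_neg heven] at ih'
        rw [if_pos (e1.mpr heven)]
        linarith
      · rw [if_pos heven] at ih'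
        rw [if_neg ((not_not.mpr heven) ∘ e1.mp)]
        linarith
      · rw [if_neg heven] at ih'
        rw [if_pos (e1.mpr heven)]
        linarith
  have hstep2 : ∀ n : ℤ, f (n + 2) = f n + (a + b) := by
    intro n
    have h1 := hgap n
    have h2 := hgap (n + 1)
    rw [show n + 1 + 1 = n + 2 from by ring] at h2
    have e1 : Even (n + 1) ↔ ¬Even n := by rw [Int.even_iff, Int.even_iff]; omega
    by_cases heven : Even n
    · rw [if_pos heven] at h1
      rw [if_neg ((not_not.mpr heven) ∘ e1.mp)] at h2
      linarith
    · rw [if_neg heven] at h1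
      rw [if_pos (e1.mpr heven)] at h2
      linarith
  have hmul : ∀ m : ℤ, ∀ k : ℤ, f (k + 2 * m) = f k + m * (a + b) := by
    intro m
    induction m using Int.induction_on with
    | zero => intro k; simp
    | succ i ih =>
      intro k
      have e : k + 2 * ((i : ℤ) + 1) = k + 2 * i + 2 := by ring
      rw [e, hstep2 (k + 2 * i), ih k]
      push_cast
      ring
    | pred i ih =>
      intro k
      have e : k + 2 * (-(i : ℤ) - 1) = (k - 2) + 2 * (-(i : ℤ)) := by ring
      have e2 : (k - 2) + 2 = k := by ring
      have h2 := hstep2 (k - 2)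
      rw [e2] at h2
      rw [e, ih (k - 2)]
      rw [h2]
      push_cast
      ring
  have hgapa : ∀ i : ℤ, f (2 * i + 1) - f (2 * i) = a := by
    intro i
    have := hgap (2 * i)
    rwa [if_pos ⟨i, by ring⟩] at this
  have hgapb : ∀ i : ℤ, f (2 * i + 2) - f (2 * i + 1) = b := by
    intro i
    have := hgap (2 * i + 1)
    rw [show 2 * i + 1 + 1 = 2 * i + 2 from by ring] at this
    rwa [if_neg (by rw [Int.even_iff]; omega)] at this
  have hgap_ge : ∀ n : ℤ, a ≤ f (n + 1) - f n := by
    intro n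
    have := hgap n
    by_cases heven : Even n
    · rw [if_pos heven] at this; linarith
    · rw [if_neg heven] at this; linarith
  have hub : ∀ n : ℕ, f 0 + n * a ≤ f (n : ℤ) := by
    intro n
    induction n with
    | zero => simp
    | succ n ih =>
      have hg := hgap_ge (n : ℤ)
      have e : ((n + 1 : ℕ) : ℤ) = (n : ℤ) + 1 := by push_cast; ring
      rw [e]
      push_cast
      push_cast at ih
      linarith
  have hlb : ∀ n : ℕ, f (-(n : ℤ)) ≤ f 0 - n * a := by
    intro n
    induction n with
    | zero => simp
    | succ n ih =>
      have := hgap_ge (-(n : ℤ) - 1)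
      rw [show -(n : ℤ) - 1 + 1 = -(n : ℤ) from by ring] at this
      have e : (-(↑(n + 1) : ℤ)) = -(n : ℤ) - 1 := by push_cast; ring
      rw [e]
      push_cast
      push_cast at ih
      linarith
  have hrange : Set.range f = X := by
    apply Set.eq_of_subset_of_subset
    · rintro t ⟨k, rfl⟩; exact hfmem k
    · intro x hx
      obtain ⟨n, hn⟩ := exists_nat_ge ((f 0 - x) / a)
      have hn' : f (-(n : ℤ)) ≤ x := by
        have h1 := hlb n
        have h2 : f 0 - x ≤ n * a := by
          rw [div_le_iff₀ ha] at hn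
          linarith
        linarith
      obtain ⟨m, hm⟩ := exists_nat_gt ((x - f 0) / a)
      have hm' : x < f (m : ℤ) := by
        have h1 := hub m
        have h2 : x - f 0 < m * a := by
          rw [div_lt_iff₀ ha] at hm
          linarith
        linarith
      have hpq : (-(n : ℤ)) ≤ (m : ℤ) := by
        have := lt_of_le_of_lt hn' hm'
        exact le_of_lt (hfmono.lt_iff_lt.mp this)
      set P : ℕ → Prop := fun j => f (-(n : ℤ) + j) ≤ x with hP
      have hP0 : P 0 := by simpa [hP] using hn'
      set N : ℕ := n + m with hN
      set j0 : ℕ := Nat.findGreatest P N with hj0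
      have hspec : P j0 := Nat.findGreatest_spec (Nat.zero_le N) hP0
      have hle : j0 ≤ N := Nat.findGreatest_le N
      have hjlt : j0 < N := by
        rcases lt_or_eq_of_le hle with h | h
        · exact h
        · exfalso
          have : P N := h ▸ hspec
          rw [hP] at this
          have e : (-(n : ℤ) + (N : ℤ)) = (m : ℤ) := by rw [hN]; push_cast; ring
          rw [e] at this
          linarith
      have hnot : ¬P (j0 + 1) :=
        Nat.findGreatest_is_greatest (by omega : j0 < j0 + 1) hjlt
      set k : ℤ := -(n : ℤ) + j0 with hk_def
      have hk3 : f k ≤ x := hspec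
      have hk4 : x < f (k + 1) := by
        have e : (-(n : ℤ) + ((j0 + 1 : ℕ) : ℤ)) = k + 1 := by rw [hk_def]; push_cast; ring
        by_contra hcon
        push_neg at hcon
        refine hnot ?_
        show f (-(n : ℤ) + ((j0 + 1 : ℕ) : ℤ)) ≤ x
        rw [e]; exact hcon
      rcases eq_or_lt_of_le hk3 with h | h
      · exact ⟨k, h⟩
      · exfalso
        have := (hnxt (f k) (hfmem k)).2 ⟨hx, h⟩
        rw [← hfsucc k] at this
        linarith
  refine ⟨⟨a, b, ha, hab, f, hfmono, hrange, hgapa, hgapb⟩, ?_⟩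
  intro x hx y hy
  rw [← hrange] at hx hy
  obtain ⟨i, hi⟩ := hx
  obtain ⟨j, hj⟩ := hy
  rcases Int.even_or_odd (i + j) with hpar | hpar
  · -- translation case
    obtain ⟨w, hw⟩ := hpar
    set c : ℤ := w - i with hc_def
    have hc : j = i + 2 * c := by omega
    refine ⟨transIso ((c : ℝ) * (a + b)), ?_, ?_⟩
    · have hcoe : ⇑(transIso ((c : ℝ) * (a + b))) = fun t => t + (c : ℝ) * (a + b) := rfl
      rw [hcoe, ← hrange]
      apply Set.eq_of_subset_of_subset
      · rintro t ⟨s, ⟨k, rfl⟩, rfl⟩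
        exact ⟨k + 2 * c, by rw [hmul c k]⟩
      · rintro t ⟨k, rfl⟩
        refine ⟨f (k - 2 * c), ⟨k - 2 * c, rfl⟩, ?_⟩
        have := hmul c (k - 2 * c)
        rw [show k - 2 * c + 2 * c = k from by ring] at this
        rw [this]
    · have : transIso ((c : ℝ) * (a + b)) x = x + (c : ℝ) * (a + b) := rfl
      rw [this, ← hi, ← hj, hc, hmul c i]
  · -- reflection case
    set n := i + j with hn_def
    have hn1 : Even (n - 1) := by
      obtain ⟨w, hw⟩ := hpar
      exact ⟨w, by omega⟩
    rw [Int.even_iff] at hn1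
    have hL : ∀ k : ℤ, f k + f (n - k) = f 0 + f n := by
      intro k
      induction k using Int.induction_on with
      | zero => rw [show n - 0 = n from by ring]
      | succ k ih =>
        have e1 := hgap (k : ℤ)
        have e2 := hgap (n - (k : ℤ) - 1)
        rw [show n - (k : ℤ) - 1 + 1 = n - k from by ring] at e2
        have epar : Even (n - (k : ℤ) - 1) ↔ Even (k : ℤ) := by
          rw [Int.even_iff, Int.even_iff]; omega
        rw [show n - ((k : ℤ) + 1) = n - k - 1 from by ring]
        by_cases h : Even (k : ℤ)
        · rw [if_pos h] at e1
          rw [if_pos (epar.mpr h)] at e2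
          linarith
        · rw [if_neg h] at e1
          rw [if_neg (fun hh => h (epar.mp hh))] at e2
          linarith
      | pred k ih =>
        have e1 := hgap (-(k : ℤ) - 1)
        rw [show -(k : ℤ) - 1 + 1 = -(k : ℤ) from by ring] at e1
        have e2 := hgap (n + (k : ℤ))
        rw [show n + (k : ℤ) + 1 = n - (-(k : ℤ) - 1) from by ring] at e2
        rw [show n - (-(k : ℤ)) = n + k from by ring] at ih
        have epar : Even (-(k : ℤ) - 1) ↔ Even (n + (k : ℤ)) := by
          rw [Int.even_iff, Int.even_iff]; omega
        by_cases h : Even (-(k : ℤ) - 1)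
        · rw [if_pos h] at e1
          rw [if_pos (epar.mp h)] at e2
          linarith
        · rw [if_neg h] at e1
          rw [if_neg (fun hh => h (epar.mpr hh))] at e2
          linarith
    have hfij : f i + f j = f 0 + f n := by
      have := hL i
      rw [show n - i = j from by omega] at this
      exact this
    refine ⟨reflIso (x + y), ?_, ?_⟩
    · have hcoe : ⇑(reflIso (x + y)) = fun t => (x + y) - t := rfl
      rw [hcoe, ← hrange, ← hi, ← hj]
      apply Set.eq_of_subset_of_subset
      · rintro t ⟨s, ⟨k, rfl⟩, rfl⟩
        refine ⟨n - k, ?_⟩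
        show f (n - k) = f i + f j - f k
        have := hL k
        linarith
      · rintro t ⟨k, rfl⟩
        refine ⟨f (n - k), ⟨n - k, rfl⟩, ?_⟩
        show f i + f j - f (n - k) = f k
        have := hL (n - k)
        rw [show n - (n - k) = k from by ring] at this
        linarith
    · have : reflIso (x + y) x = (x + y) - x := rfl
      rw [this]; ring


/-- a Delone set `X ⊆ ℝ` of type `(r,R)` whose `ρ`-clusters are mutually
equivalent and contain points of `X` on both sides of their centers is an `ab`-set
(for some `0 < a ≤ b`, possibly `a = b`), and hence a regular system. -/
theorem delone_line_abSet (r R ρ : ℝ) (hr : 0 < r) (hrR : r < R) (hρ : 0 < ρ)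
    (X : Set ℝ) (hX : IsDeloneSet X r R)
    (hclus : ∀ x ∈ X, ∀ x' ∈ X, ClustersEquiv X x x' ρ)
    (hsides : ∀ x ∈ X, (∃ y ∈ cluster X x ρ, y < x) ∧ (∃ y ∈ cluster X x ρ, x < y)) :
    (∃ a b : ℝ, 0 < a ∧ a ≤ b ∧ IsABSet X a b) ∧ IsRegularSystem X := by
  classical
  set nxt : ℝ → ℝ := fun x => sInf (X ∩ Set.Ioi x) with hnxt_def
  set prv : ℝ → ℝ := fun x => sSup (X ∩ Set.Iio x) with hprv_def
  have hsep : ∀ x ∈ X, ∀ y ∈ X, dist x y < r → x = y := by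
    intro x hx y hy hd
    exact hX.1 y ⟨hx, Metric.mem_ball.mpr hd⟩ ⟨hy, Metric.mem_ball.mpr (by simpa using hr)⟩
  have hnxt : ∀ x ∈ X, IsLeast (X ∩ Set.Ioi x) (nxt x) := by
    intro x hx
    obtain ⟨y, ⟨hyX, hyB⟩, hxy⟩ := (hsides x hx).2
    have hne : (X ∩ Set.Ioi x).Nonempty := ⟨y, hyX, hxy⟩
    have hbdd : BddBelow (X ∩ Set.Ioi x) := ⟨x, fun z hz => le_of_lt hz.2⟩
    have hlt : sInf (X ∩ Set.Ioi x) < sInf (X ∩ Set.Ioi x) + r := by linarith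
    obtain ⟨s, hs, hsr⟩ := exists_lt_of_csInf_lt hne hlt
    have hleast : IsLeast (X ∩ Set.Ioi x) s := by
      refine ⟨hs, fun z hz => ?_⟩
      by_contra hzs
      push_neg at hzs
      have h1 : sInf (X ∩ Set.Ioi x) ≤ z := csInf_le hbdd hz
      have : dist s z < r := by
        rw [Real.dist_eq, abs_lt]; constructor <;> linarith
      exact absurd (hsep s hs.1 z hz.1 this) (ne_of_gt hzs)
    have hns : nxt x = s := hleast.csInf_eq
    rw [hns]; exact hleast
  have hprv : ∀ x ∈ X, IsGreatest (X ∩ Set.Iio x) (prv x) := by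
    intro x hx
    obtain ⟨y, ⟨hyX, hyB⟩, hxy⟩ := (hsides x hx).1
    have hne : (X ∩ Set.Iio x).Nonempty := ⟨y, hyX, hxy⟩
    have hbdd : BddAbove (X ∩ Set.Iio x) := ⟨x, fun z hz => le_of_lt hz.2⟩
    have hlt : sSup (X ∩ Set.Iio x) - r < sSup (X ∩ Set.Iio x) := by linarith
    obtain ⟨s, hs, hsr⟩ := exists_lt_of_lt_csSup hne hlt
    have hgreat : IsGreatest (X ∩ Set.Iio x) s := by
      refine ⟨hs, fun z hz => ?_⟩
      by_contra hzs
      push_neg at hzs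
      have h1 : z ≤ sSup (X ∩ Set.Iio x) := le_csSup hbdd hz
      have : dist s z < r := by
        rw [Real.dist_eq, abs_lt]; constructor <;> linarith
      exact absurd (hsep s hs.1 z hz.1 this) (ne_of_lt hzs)
    have hps : prv x = s := hgreat.csSup_eq
    rw [hps]; exact hgreat
  have hnxt_le : ∀ x ∈ X, nxt x ≤ x + ρ := by
    intro x hx
    obtain ⟨y, ⟨hyX, hyB⟩, hxy⟩ := (hsides x hx).2
    have h1 := (hnxt x hx).2 ⟨hyX, hxy⟩
    have hyb : |y - x| ≤ ρ := by simpa [Real.dist_eq] using Metric.mem_closedBall.mp hyB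
    have h2 := abs_le.mp hyb
    linarith [h2.2]
  have hprv_ge : ∀ x ∈ X, x - ρ ≤ prv x := by
    intro x hx
    obtain ⟨y, ⟨hyX, hyB⟩, hxy⟩ := (hsides x hx).1
    have h1 := (hprv x hx).2 ⟨hyX, hxy⟩
    have hyb : |y - x| ≤ ρ := by simpa [Real.dist_eq] using Metric.mem_closedBall.mp hyB
    have h2 := abs_le.mp hyb
    linarith [h2.1]
  obtain ⟨x0, hx0, -⟩ := hX.2 0
  have hpair0 := delone_aux_pair r R ρ hr hrR hρ X hX hclus hsides nxt prv
    hnxt hprv hnxt_le hprv_ge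
  exact delone_aux_main X nxt prv hnxt hprv x0 hx0 hpair0
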